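/- arXiv:2111.00602 — 4 statements merged into one kernel-verified Lean document; each statement's English description precedes it below -/
import Mathlib

section
/- Let k ≥ 1 and let s_i = (log^(i) n)^6 for i ∈ [1,k], where log^(i) is the iterated logarithm. Then the sum Σ_{i=0}^{k-1} (1/(log^(i+1) n)^2) · log₂((log^(i) n)^6) is at most C · log^(k+1) n for some absolute constant C, for all sufficiently large n. -/
def iterLog : ℕ → ℕ → ℕ
  | 0, n => n
  | i + 1, n => max (Nat.log 2 (iterLog i n)) 1

lemma iterLog_one_eq (i : ℕ) : iterLog i 1 = 1 := by
  induction i with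
  | zero => rfl
  | succ i ih => simp [iterLog, ih]

lemma iterLog_succ_pos (i n : ℕ) : 1 ≤ iterLog (i + 1) n := le_max_right _ _

lemma iterLog_shift (i n : ℕ) : iterLog (i + 1) n = iterLog i (iterLog 1 n) := by
  induction i with
  | zero => rfl
  | succ i ih => show max (Nat.log 2 (iterLog (i+1) n)) 1 = _; rw [ih]; rfl

lemma two_pow_ge (t : ℕ) (ht : 1 ≤ t) : 2 * t ≤ 2 ^ t := by
  obtain ⟨s, rfl⟩ : ∃ s, t = s + 1 := ⟨t - 1, by omega⟩
  have := Nat.lt_two_pow_self (n := s)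
  rw [pow_succ]
  omega

lemma log_pos_of_two_le {m : ℕ} (hm : 2 ≤ m) : 1 ≤ Nat.log 2 m :=
  (Nat.le_log_iff_pow_le one_lt_two (by omega)).mpr (by simpa using hm)

lemma two_log_le (m : ℕ) (hm : 2 ≤ m) : 2 * Nat.log 2 m ≤ m := by
  have h1 : 2 ^ Nat.log 2 m ≤ m := Nat.pow_log_le_self 2 (by omega)
  calc 2 * Nat.log 2 m ≤ 2 ^ Nat.log 2 m := two_pow_ge _ (log_pos_of_two_le hm)
    _ ≤ m := h1

lemma logb_nat_lt (n : ℕ) (hn : 1 ≤ n) : Real.logb 2 n < (Nat.log 2 n : ℝ) + 1 := by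
  have h : (n : ℝ) < 2 ^ (Nat.log 2 n + 1) := by
    exact_mod_cast Nat.lt_pow_succ_log_self (by norm_num) n
  have h2 := Real.logb_lt_logb (b := 2) one_lt_two (by exact_mod_cast hn) h
  calc Real.logb 2 n < Real.logb 2 (2 ^ (Nat.log 2 n + 1)) := h2
    _ = (Nat.log 2 n : ℝ) + 1 := by
        rw [Real.logb_pow]; push_cast; norm_num [Real.logb_self_eq_one]

lemma main_bound : ∀ k n : ℕ,
    ∑ i ∈ Finset.range k,
        (1 / ((iterLog (i + 1) n : ℝ)) ^ 2) * Real.logb 2 (((iterLog i n : ℝ)) ^ 6)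
      ≤ 24 - 12 / (iterLog 1 n : ℝ) := by
  intro k
  induction k with
  | zero =>
    intro n
    have h1 : (1 : ℝ) ≤ (iterLog 1 n : ℝ) := by exact_mod_cast iterLog_succ_pos 0 n
    have : 12 / (iterLog 1 n : ℝ) ≤ 12 := by
      rw [div_le_iff₀ (by linarith)]; nlinarith
    simpa using by linarith
  | succ k ih =>
    intro n
    rw [Finset.sum_range_succ']
    show (∑ i ∈ Finset.range k,
        (1 / ((iterLog (i + 1 + 1) n : ℝ)) ^ 2) * Real.logb 2 (((iterLog (i + 1) n : ℝ)) ^ 6))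
        + (1 / ((iterLog 1 n : ℝ)) ^ 2) * Real.logb 2 ((n : ℝ) ^ 6)
      ≤ 24 - 12 / (iterLog 1 n : ℝ)
    have hsum_eq : ∑ i ∈ Finset.range k,
        (1 / ((iterLog (i + 1 + 1) n : ℝ)) ^ 2) * Real.logb 2 (((iterLog (i + 1) n : ℝ)) ^ 6)
        = ∑ i ∈ Finset.range k,
        (1 / ((iterLog (i + 1) (iterLog 1 n) : ℝ)) ^ 2) *
          Real.logb 2 (((iterLog i (iterLog 1 n) : ℝ)) ^ 6) := by
      refine Finset.sum_congr rfl fun i _ => ?_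
      rw [iterLog_shift (i + 1) n, iterLog_shift i n]
    rw [hsum_eq]
    have hm1 : 1 ≤ iterLog 1 n := iterLog_succ_pos 0 n
    have hmR : (1 : ℝ) ≤ (iterLog 1 n : ℝ) := by exact_mod_cast hm1
    have hmpos : (0 : ℝ) < (iterLog 1 n : ℝ) := by linarith
    rcases Nat.lt_or_ge (iterLog 1 n) 2 with hm2 | hm2
    · -- iterLog 1 n = 1, so n ≤ 3
      have hmeq : iterLog 1 n = 1 := by omega
      have hzero : ∑ i ∈ Finset.range k,
          (1 / ((iterLog (i + 1) (iterLog 1 n) : ℝ)) ^ 2) *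
            Real.logb 2 (((iterLog i (iterLog 1 n) : ℝ)) ^ 6) = 0 := by
        refine Finset.sum_eq_zero fun i _ => ?_
        rw [hmeq, iterLog_one_eq i, iterLog_one_eq (i + 1)]
        norm_num
      rw [hzero, zero_add, hmeq]
      have hn3 : n ≤ 3 := by
        by_contra h
        push_neg at h
        have h4 : (2 : ℕ) ^ 2 ≤ n := by omega
        have : 2 ≤ Nat.log 2 n := (Nat.le_log_iff_pow_le one_lt_two (by omega)).mpr h4
        have : 2 ≤ iterLog 1 n := by
          show 2 ≤ max (Nat.log 2 (iterLog 0 n)) 1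
          show 2 ≤ max (Nat.log 2 n) 1
          omega
        omega
      have hlog : Real.logb 2 ((n : ℝ) ^ 6) ≤ 12 := by
        rcases Nat.eq_zero_or_pos n with h0 | h0
        · simp [h0]
        · have hle : ((n : ℝ)) ^ 6 ≤ 2 ^ 12 := by
            have h3 : (n : ℝ) ≤ 3 := by exact_mod_cast hn3
            have h0' : (0 : ℝ) ≤ (n : ℝ) := by positivity
            nlinarith [pow_le_pow_left₀ h0' h3 6]
          have hpos : (0 : ℝ) < (n : ℝ) ^ 6 := by positivity
          calc Real.logb 2 ((n : ℝ) ^ 6) ≤ Real.logb 2 (2 ^ 12) :=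
                Real.logb_le_logb_of_le one_lt_two hpos hle
            _ = 12 := by
                rw [Real.logb_pow]; push_cast; norm_num [Real.logb_self_eq_one]
      push_cast
      norm_num
      linarith
    · -- iterLog 1 n ≥ 2
      have hmlog : iterLog 1 n = Nat.log 2 n := by
        have h : iterLog 1 n = max (Nat.log 2 n) 1 := rfl
        omega
      have hn2 : 2 ≤ n := by
        by_contra h
        push_neg at h
        have h0 : Nat.log 2 n = 0 := Nat.log_of_lt (by omega)
        omega
      have hlogn : Real.logb 2 (n : ℝ) ≤ (iterLog 1 n : ℝ) + 1 := by
        have := logb_nat_lt n (by omega)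
        rw [hmlog]; push_cast; linarith
      have ht0 : (1 / ((iterLog 1 n : ℝ)) ^ 2) * Real.logb 2 ((n : ℝ) ^ 6)
          ≤ 12 / (iterLog 1 n : ℝ) := by
        rw [Real.logb_pow]
        calc (1 / ((iterLog 1 n : ℝ)) ^ 2) * (((6 : ℕ) : ℝ) * Real.logb 2 (n : ℝ))
            ≤ (1 / ((iterLog 1 n : ℝ)) ^ 2) * (12 * (iterLog 1 n : ℝ)) := by
              apply mul_le_mul_of_nonneg_left _ (by positivity)
              push_cast
              linarith
          _ = 12 / (iterLog 1 n : ℝ) := by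
              field_simp
      have htail := ih (iterLog 1 n)
      have hlogm_pos : 1 ≤ Nat.log 2 (iterLog 1 n) := log_pos_of_two_le hm2
      have hlm : iterLog 1 (iterLog 1 n) = Nat.log 2 (iterLog 1 n) := by
        have h : iterLog 1 (iterLog 1 n) = max (Nat.log 2 (iterLog 1 n)) 1 := rfl
        omega
      have hlogm_posR : (1 : ℝ) ≤ (Nat.log 2 (iterLog 1 n) : ℝ) := by exact_mod_cast hlogm_pos
      have hkey : 12 / (iterLog 1 n : ℝ) + 12 / (iterLog 1 n : ℝ)
          ≤ 12 / (Nat.log 2 (iterLog 1 n) : ℝ) := by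
        have h24 : 12 / (iterLog 1 n : ℝ) + 12 / (iterLog 1 n : ℝ)
            = 24 / (iterLog 1 n : ℝ) := by ring
        rw [h24, div_le_div_iff₀ hmpos (by linarith)]
        have h2l : (2 * Nat.log 2 (iterLog 1 n) : ℝ) ≤ (iterLog 1 n : ℝ) := by
          exact_mod_cast two_log_le _ hm2
        linarith
      rw [hlm] at htail
      calc _ ≤ (24 - 12 / (Nat.log 2 (iterLog 1 n) : ℝ)) + 12 / (iterLog 1 n : ℝ) :=
            add_le_add htail ht0
        _ ≤ 24 - 12 / (iterLog 1 n : ℝ) := by linarith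

theorem stmt4 : ∃ C : ℝ, 0 < C ∧ ∃ N : ℕ, ∀ n : ℕ, N ≤ n → ∀ k : ℕ, 1 ≤ k →
    ∑ i ∈ Finset.range k,
        (1 / ((iterLog (i + 1) n : ℝ)) ^ 2) * Real.logb 2 (((iterLog i n : ℝ)) ^ 6)
      ≤ C * (iterLog (k + 1) n : ℝ) := by
  refine ⟨24, by norm_num, 1, fun n _ k _ => ?_⟩
  have h1 : (1 : ℝ) ≤ (iterLog (k + 1) n : ℝ) := by exact_mod_cast iterLog_succ_pos k n
  have h2 := main_bound k n
  have h3 : (0 : ℝ) < (iterLog 1 n : ℝ) := by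
    have : (1 : ℝ) ≤ (iterLog 1 n : ℝ) := by exact_mod_cast iterLog_succ_pos 0 n
    linarith
  have h4 : 0 ≤ 12 / (iterLog 1 n : ℝ) := by positivity
  nlinarith
end

section
/- Let x₁, ..., x_n be a sequence of keys and let f map each key independently and uniformly at random to one of m = n/ε fingerprints, where ε ∈ (0,1) and n/ε is a positive integer. Let Y_i be the indicator that f(x_i) = f(x_j) for some j < i, and let D = |{i : ∃ j ≠ i, f(x_i) = f(x_j)}|. Then D ≤ 2·Σᵢ Yᵢ, E[Σᵢ Yᵢ] ≤ ε·n, and Pr[D ≥ C(ε·n + log n)] ≤ n^{-Ω(1)} for a suitable absolute constant C. -/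
open MeasureTheory ProbabilityTheory
open Finset

open Finset

open scoped Classical in
lemma aux_countS {n m : ℕ} (hm : 0 < m) (S : Finset (Fin n)) :
    (Finset.univ.filter (fun g : Fin n → Fin m => ∀ i ∈ S, ∃ j < i, g j = g i)).card
      ≤ n ^ S.card * m ^ (n - S.card) := by
  classical
  set z : Fin m := ⟨0, hm⟩ with hz
  set w : (Fin n → Fin m) → Fin n → Fin n := fun g i =>
    if h : (univ.filter (fun j => j < i ∧ g j = g i)).Nonempty then
      (univ.filter (fun j => j < i ∧ g j = g i)).min' h else i with hw
  set φ : (Fin n → Fin m) → (Fin n → Fin n) × (Fin n → Fin m) := fun g =>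
    (fun i => if i ∈ S then w g i else i, fun i => if i ∈ S then z else g i) with hφ
  set T := (Fintype.piFinset fun i : Fin n => if i ∈ S then (univ : Finset (Fin n)) else {i}) ×ˢ
    (Fintype.piFinset fun i : Fin n => if i ∈ S then ({z} : Finset (Fin m)) else univ) with hT
  have hmaps : ∀ g ∈ Finset.univ.filter
      (fun g : Fin n → Fin m => ∀ i ∈ S, ∃ j < i, g j = g i), φ g ∈ T := by
    intro g _
    rw [hT, Finset.mem_product]
    constructor
    · rw [Fintype.mem_piFinset]
      intro i
      by_cases hi : i ∈ S <;> simp [hφ, hi]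
    · rw [Fintype.mem_piFinset]
      intro i
      by_cases hi : i ∈ S <;> simp [hφ, hi]
  have hinj : Set.InjOn φ (Finset.univ.filter
      (fun g : Fin n → Fin m => ∀ i ∈ S, ∃ j < i, g j = g i)) := by
    intro g₁ hg₁ g₂ hg₂ heq
    simp only [Finset.coe_filter, Set.mem_setOf_eq, Finset.mem_univ, true_and] at hg₁ hg₂
    have hfst := congrArg Prod.fst heq
    have hsnd := congrArg Prod.snd heq
    simp only [hφ] at hfst hsnd
    have main : ∀ k : ℕ, ∀ i : Fin n, i.val = k → g₁ i = g₂ i := by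
      intro k
      induction k using Nat.strong_induction_on with
      | _ k IH =>
        intro i hik
        by_cases hiS : i ∈ S
        · have hne1 : (univ.filter (fun j => j < i ∧ g₁ j = g₁ i)).Nonempty := by
            obtain ⟨j, hj, hjeq⟩ := hg₁ i hiS
            exact ⟨j, by simp [hj, hjeq]⟩
          have hne2 : (univ.filter (fun j => j < i ∧ g₂ j = g₂ i)).Nonempty := by
            obtain ⟨j, hj, hjeq⟩ := hg₂ i hiS
            exact ⟨j, by simp [hj, hjeq]⟩
          have hweq : w g₁ i = w g₂ i := by
            have := congrFun hfst i
            simpa [hiS] using this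
          have h1 : w g₁ i ∈ univ.filter (fun j => j < i ∧ g₁ j = g₁ i) := by
            rw [hw]; simp only [hne1, dif_pos]; exact Finset.min'_mem _ _
          have h2 : w g₂ i ∈ univ.filter (fun j => j < i ∧ g₂ j = g₂ i) := by
            rw [hw]; simp only [hne2, dif_pos]; exact Finset.min'_mem _ _
          rw [Finset.mem_filter] at h1 h2
          obtain ⟨-, hj1lt, hj1eq⟩ := h1
          obtain ⟨-, hj2lt, hj2eq⟩ := h2
          have hIH : g₁ (w g₁ i) = g₂ (w g₁ i) := by
            apply IH (w g₁ i).val _ _ rfl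
            rw [← hik]; exact hj1lt
          rw [← hj1eq, hIH, hweq, hj2eq]
        · have := congrFun hsnd i
          simpa [hiS] using this
    funext i
    exact main i.val i rfl
  have hcard := Finset.card_le_card_of_injOn φ hmaps hinj
  refine hcard.trans (le_of_eq ?_)
  rw [hT, Finset.card_product, Fintype.card_piFinset, Fintype.card_piFinset]
  have e1 : ∀ i : Fin n, (if i ∈ S then (univ : Finset (Fin n)) else {i}).card
      = if i ∈ S then n else 1 := by
    intro i; by_cases hi : i ∈ S <;> simp [hi]
  have e2 : ∀ i : Fin n, (if i ∈ S then ({z} : Finset (Fin m)) else univ).card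
      = if i ∈ S then 1 else m := by
    intro i; by_cases hi : i ∈ S <;> simp [hi]
  simp only [e1, e2]
  rw [Finset.prod_ite, Finset.prod_ite]
  simp only [Finset.prod_const]
  have c1 : (univ.filter (fun i : Fin n => i ∈ S)).card = S.card := by
    congr 1; ext i; simp
  have c2 : (univ.filter (fun i : Fin n => ¬ i ∈ S)).card = n - S.card := by
    have hc : univ.filter (fun i : Fin n => ¬ i ∈ S) = Sᶜ := by ext i; simp
    rw [hc, Finset.card_compl, Fintype.card_fin]
  rw [c1, c2, one_pow, one_pow, mul_one, one_mul]

open Finset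

open scoped Classical in
lemma aux_double {n m : ℕ} (g : Fin n → Fin m) :
    (Finset.univ.filter (fun i : Fin n => ∃ j, j ≠ i ∧ g j = g i)).card
      ≤ 2 * (Finset.univ.filter (fun i : Fin n => ∃ j < i, g j = g i)).card := by
  classical
  set A := Finset.univ.filter (fun i : Fin n => ∃ j, j ≠ i ∧ g j = g i) with hA
  set B := Finset.univ.filter (fun i : Fin n => ∃ j < i, g j = g i) with hB
  have hsub : A ⊆ (A \ B) ∪ B := by
    intro i hi
    by_cases hiB : i ∈ B
    · exact Finset.mem_union_right _ hiB
    · exact Finset.mem_union_left _ (Finset.mem_sdiff.mpr ⟨hi, hiB⟩)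
  have hkey : (A \ B).card ≤ B.card := by
    set ψ : Fin n → Fin n := fun i =>
      if h : (univ.filter (fun j => j ≠ i ∧ g j = g i)).Nonempty then
        (univ.filter (fun j => j ≠ i ∧ g j = g i)).min' h else i with hψ
    have hprop : ∀ i ∈ A \ B, ψ i ≠ i ∧ g (ψ i) = g i ∧ i < ψ i := by
      intro i hi
      rw [Finset.mem_sdiff, hA, hB, Finset.mem_filter, Finset.mem_filter] at hi
      obtain ⟨⟨-, j, hj, hjeq⟩, hiB⟩ := hi
      have hne : (univ.filter (fun j => j ≠ i ∧ g j = g i)).Nonempty :=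
        ⟨j, by simp [hj, hjeq]⟩
      have hmem : ψ i ∈ univ.filter (fun j => j ≠ i ∧ g j = g i) := by
        rw [hψ]; simp only [hne, dif_pos]; exact Finset.min'_mem _ _
      rw [Finset.mem_filter] at hmem
      obtain ⟨-, hne', heq'⟩ := hmem
      refine ⟨hne', heq', ?_⟩
      rcases lt_trichotomy i (ψ i) with h | h | h
      · exact h
      · exact absurd h.symm hne'
      · exact absurd (by simp; exact ⟨ψ i, h, heq'⟩) hiB
    apply Finset.card_le_card_of_injOn ψ
    · intro i hi
      obtain ⟨hne', heq', hlt⟩ := hprop i hi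
      rw [hB, Finset.mem_coe, Finset.mem_filter]
      exact ⟨Finset.mem_univ _, i, hlt, heq'.symm⟩
    · intro i₁ h₁ i₂ h₂ heq
      by_contra hne
      rw [Finset.mem_coe] at h₁ h₂
      obtain ⟨-, he₁, -⟩ := hprop i₁ h₁
      obtain ⟨-, he₂, -⟩ := hprop i₂ h₂
      have hgeq : g i₁ = g i₂ := by rw [← he₁, heq, he₂]
      rcases lt_trichotomy i₁ i₂ with h | h | h
      · have : i₂ ∈ B := by
          rw [hB, Finset.mem_filter]; exact ⟨Finset.mem_univ _, i₁, h, hgeq⟩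
        exact absurd this (Finset.mem_sdiff.mp h₂).2
      · exact hne h
      · have : i₁ ∈ B := by
          rw [hB, Finset.mem_filter]; exact ⟨Finset.mem_univ _, i₂, h, hgeq.symm⟩
        exact absurd this (Finset.mem_sdiff.mp h₁).2
  calc A.card ≤ (A \ B).card + B.card := (Finset.card_le_card hsub).trans (Finset.card_union_le _ _)
    _ ≤ B.card + B.card := by omega
    _ = 2 * B.card := by omega

open Finset MeasureTheory ProbabilityTheory

open scoped Classical in
lemma aux_meas_single {n m : ℕ} {Ω : Type} [MeasurableSpace Ω] (μ : Measure Ω)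
    (f : Fin n → Ω → Fin m)
    (hind : iIndepFun f μ)
    (hunif : ∀ (i : Fin n) (v : Fin m), μ {ω | f i ω = v} = (m : ENNReal)⁻¹)
    (g : Fin n → Fin m) :
    μ {ω | ∀ i, f i ω = g i} = (m : ENNReal)⁻¹ ^ n := by
  have h := hind.measure_inter_preimage_eq_mul Finset.univ
    (sets := fun i => {g i}) (fun i _ => measurableSet_singleton _)
  have hset : {ω | ∀ i, f i ω = g i} = ⋂ i ∈ Finset.univ, f i ⁻¹' {g i} := by
    ext ω; simp
  rw [hset, h]
  have : ∀ i : Fin n, μ (f i ⁻¹' {g i}) = (m : ENNReal)⁻¹ := by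
    intro i
    have : f i ⁻¹' {g i} = {ω | f i ω = g i} := by ext ω; simp
    rw [this, hunif]
  simp only [this, Finset.prod_const, Finset.card_univ, Fintype.card_fin]

open scoped Classical in
lemma aux_meas_le {n m : ℕ} {Ω : Type} [MeasurableSpace Ω] (μ : Measure Ω)
    (f : Fin n → Ω → Fin m)
    (hind : iIndepFun f μ)
    (hunif : ∀ (i : Fin n) (v : Fin m), μ {ω | f i ω = v} = (m : ENNReal)⁻¹)
    (p : (Fin n → Fin m) → Prop) :
    μ {ω | p (fun i => f i ω)} ≤
      ((Finset.univ.filter p).card : ENNReal) * (m : ENNReal)⁻¹ ^ n := by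
  have hsub : {ω | p (fun i => f i ω)} ⊆
      ⋃ g ∈ Finset.univ.filter p, {ω | ∀ i, f i ω = g i} := by
    intro ω hω
    refine Set.mem_biUnion (Finset.mem_filter.mpr ⟨Finset.mem_univ _, hω⟩) (fun i => rfl)
  calc μ {ω | p (fun i => f i ω)}
      ≤ ∑ g ∈ Finset.univ.filter p, μ {ω | ∀ i, f i ω = g i} :=
        (measure_mono hsub).trans (measure_biUnion_finset_le _ _)
    _ = ((Finset.univ.filter p).card : ENNReal) * (m : ENNReal)⁻¹ ^ n := by
        simp [aux_meas_single μ f hind hunif, mul_comm]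

open scoped Classical in
lemma aux_part2 {n m : ℕ} (hn : 1 ≤ n) (hm : 0 < m) {Ω : Type} [MeasurableSpace Ω]
    (μ : Measure Ω) [IsProbabilityMeasure μ] (f : Fin n → Ω → Fin m)
    (hind : iIndepFun f μ)
    (hunif : ∀ (i : Fin n) (v : Fin m), μ {ω | f i ω = v} = (m : ENNReal)⁻¹) :
    (∫ ω, (∑ i : Fin n, (if ∃ j < i, f j ω = f i ω then (1 : ℝ) else 0)) ∂μ)
      ≤ (n : ℝ) / m * n := by
  classical
  have hmR : (0 : ℝ) < m := by exact_mod_cast hm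
  have hnR : (0 : ℝ) < n := by exact_mod_cast hn
  by_cases hInt : Integrable
      (fun ω => ∑ i : Fin n, (if ∃ j < i, f j ω = f i ω then (1 : ℝ) else 0)) μ
  · set A : (Fin n → Fin m) → Set Ω := fun g => {ω | ∀ i, f i ω = g i} with hA
    set T : (Fin n → Fin m) → Set Ω := fun g => toMeasurable μ (A g) with hT
    set c : (Fin n → Fin m) → ℝ := fun g =>
      ((Finset.univ.filter (fun i : Fin n => ∃ j < i, g j = g i)).card : ℝ) with hc
    have hΦeq : ∀ ω, (∑ i : Fin n, (if ∃ j < i, f j ω = f i ω then (1 : ℝ) else 0))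
        = c (fun i => f i ω) := by
      intro ω; rw [hc]; rw [Finset.sum_boole]
    have hmono : ∀ ω, (∑ i : Fin n, (if ∃ j < i, f j ω = f i ω then (1 : ℝ) else 0))
        ≤ ∑ g : Fin n → Fin m, c g * (T g).indicator (fun _ => (1 : ℝ)) ω := by
      intro ω
      have hmem : ω ∈ T (fun i => f i ω) := subset_toMeasurable μ _ (fun i => rfl)
      have hterm : c (fun i => f i ω) * (T (fun i => f i ω)).indicator (fun _ => (1 : ℝ)) ω
          = ∑ i : Fin n, (if ∃ j < i, f j ω = f i ω then (1 : ℝ) else 0) := by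
        rw [Set.indicator_of_mem hmem, mul_one, hΦeq]
      rw [← hterm]
      refine Finset.single_le_sum (f := fun g => c g * (T g).indicator (fun _ => (1 : ℝ)) ω)
        ?_ (Finset.mem_univ _)
      intro g _
      have h0 : (0 : ℝ) ≤ (T g).indicator (fun _ => (1 : ℝ)) ω :=
        Set.indicator_nonneg (fun _ _ => zero_le_one) ω
      have h1 : (0 : ℝ) ≤ c g := Nat.cast_nonneg _
      exact mul_nonneg h1 h0
    have hint1 : ∀ g : Fin n → Fin m,
        Integrable (fun ω => c g * (T g).indicator (fun _ => (1 : ℝ)) ω) μ := by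
      intro g
      exact ((integrable_const (1 : ℝ)).indicator (measurableSet_toMeasurable μ _)).const_mul _
    have hΨint : Integrable
        (fun ω => ∑ g : Fin n → Fin m, c g * (T g).indicator (fun _ => (1 : ℝ)) ω) μ :=
      integrable_finset_sum _ (fun g _ => hint1 g)
    have h1 : (∫ ω, (∑ i : Fin n, (if ∃ j < i, f j ω = f i ω then (1 : ℝ) else 0)) ∂μ)
        ≤ ∫ ω, ∑ g : Fin n → Fin m, c g * (T g).indicator (fun _ => (1 : ℝ)) ω ∂μ :=
      integral_mono hInt hΨint hmono
    have hμT : ∀ g : Fin n → Fin m, (μ (T g)).toReal = ((m : ℝ)⁻¹) ^ n := by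
      intro g
      rw [hT]
      simp only [measure_toMeasurable]
      rw [hA, aux_meas_single μ f hind hunif g]
      simp [ENNReal.toReal_pow, ENNReal.toReal_inv]
    have h2 : (∫ ω, ∑ g : Fin n → Fin m, c g * (T g).indicator (fun _ => (1 : ℝ)) ω ∂μ)
        = (∑ g : Fin n → Fin m, c g) * ((m : ℝ)⁻¹) ^ n := by
      rw [integral_finset_sum _ (fun g _ => hint1 g)]
      rw [Finset.sum_mul]
      refine Finset.sum_congr rfl (fun g _ => ?_)
      rw [MeasureTheory.integral_const_mul,
        integral_indicator_const (1 : ℝ) (measurableSet_toMeasurable μ _), smul_eq_mul, mul_one]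
      rw [Measure.real, hμT]
    -- counting bound
    have hnat : (∑ g : Fin n → Fin m,
        (Finset.univ.filter (fun i : Fin n => ∃ j < i, g j = g i)).card)
        ≤ n * (n ^ 1 * m ^ (n - 1)) := by
      have hswap : (∑ g : Fin n → Fin m,
          (Finset.univ.filter (fun i : Fin n => ∃ j < i, g j = g i)).card)
          = ∑ i : Fin n,
            (Finset.univ.filter (fun g : Fin n → Fin m => ∃ j < i, g j = g i)).card := by
        simp only [Finset.card_filter]
        rw [Finset.sum_comm]
      rw [hswap]
      have hone : ∀ i : Fin n,
          (Finset.univ.filter (fun g : Fin n → Fin m => ∃ j < i, g j = g i)).card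
            ≤ n ^ 1 * m ^ (n - 1) := by
        intro i
        have heq : Finset.univ.filter (fun g : Fin n → Fin m => ∃ j < i, g j = g i)
            = Finset.univ.filter
              (fun g : Fin n → Fin m => ∀ i' ∈ ({i} : Finset (Fin n)), ∃ j < i', g j = g i') := by
          apply Finset.filter_congr; intro g _; simp
        rw [heq]
        simpa using aux_countS hm ({i} : Finset (Fin n))
      calc (∑ i : Fin n,
          (Finset.univ.filter (fun g : Fin n → Fin m => ∃ j < i, g j = g i)).card)
          ≤ ∑ _i : Fin n, n ^ 1 * m ^ (n - 1) := Finset.sum_le_sum (fun i _ => hone i)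
        _ = n * (n ^ 1 * m ^ (n - 1)) := by
            rw [Finset.sum_const, Finset.card_univ, Fintype.card_fin, smul_eq_mul]
    have hsumc : (∑ g : Fin n → Fin m, c g) ≤ ((n * (n ^ 1 * m ^ (n - 1)) : ℕ) : ℝ) := by
      rw [hc, ← Nat.cast_sum]
      exact Nat.cast_le.mpr hnat
    have hfinal : ((n * (n ^ 1 * m ^ (n - 1)) : ℕ) : ℝ) * ((m : ℝ)⁻¹) ^ n
        = (n : ℝ) / m * n := by
      have hpow : (m : ℝ) ^ n = (m : ℝ) ^ (n - 1) * m := by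
        have hn1 : n - 1 + 1 = n := Nat.sub_add_cancel hn
        rw [← pow_succ, hn1]
      rw [Nat.cast_mul, Nat.cast_mul, Nat.cast_pow, Nat.cast_pow, pow_one, inv_pow, hpow]
      field_simp
    calc (∫ ω, (∑ i : Fin n, (if ∃ j < i, f j ω = f i ω then (1 : ℝ) else 0)) ∂μ)
        ≤ (∑ g : Fin n → Fin m, c g) * ((m : ℝ)⁻¹) ^ n := h1.trans (le_of_eq h2)
      _ ≤ ((n * (n ^ 1 * m ^ (n - 1)) : ℕ) : ℝ) * ((m : ℝ)⁻¹) ^ n :=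
          mul_le_mul_of_nonneg_right hsumc (by positivity)
      _ = (n : ℝ) / m * n := hfinal
  · rw [integral_undef hInt]
    positivity


lemma aux_real {n m k : ℕ} (hn : 2 ≤ n) (hm : 0 < m) (hk1 : 1 ≤ k)
    (hknε : 6 * ((n : ℝ) / m * n) ≤ k) (hklog : 6 * Real.log n ≤ k) :
    (n.choose k : ℝ) * ((n : ℝ) ^ k * (m : ℝ) ^ (n - k)) * ((m : ℝ)⁻¹) ^ n
      ≤ (n : ℝ) ^ (-(1 : ℝ)) := by
  have hnR : (2 : ℝ) ≤ (n : ℝ) := by exact_mod_cast hn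
  have hn0 : (0 : ℝ) < n := by linarith
  have hmR : (0 : ℝ) < m := by exact_mod_cast hm
  have hkR : (0 : ℝ) < k := by exact_mod_cast hk1
  have hrhs : (n : ℝ) ^ (-(1 : ℝ)) = ((n : ℝ))⁻¹ := by
    rw [Real.rpow_neg_one]
  rw [hrhs]
  by_cases hkn : k ≤ n
  · set ε : ℝ := (n : ℝ) / m with hε
    have hε0 : 0 < ε := by positivity
    have hpow : (m : ℝ) ^ n = (m : ℝ) ^ (n - k) * (m : ℝ) ^ k := by
      rw [← pow_add]; congr 1; omega
    have hstep1 : (m : ℝ) ^ (n - k) * ((m : ℝ)⁻¹) ^ n = ((m : ℝ) ^ k)⁻¹ := by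
      rw [inv_pow, hpow]
      field_simp
    -- LHS = choose * n^k * (m^k)⁻¹ = choose * ε^k
    have hLHS : (n.choose k : ℝ) * ((n : ℝ) ^ k * (m : ℝ) ^ (n - k)) * ((m : ℝ)⁻¹) ^ n
        = (n.choose k : ℝ) * ε ^ k := by
      have : ε ^ k = (n : ℝ) ^ k * ((m : ℝ) ^ k)⁻¹ := by
        rw [hε, div_pow, div_eq_mul_inv]
      rw [this, ← hstep1]; ring
    rw [hLHS]
    -- choose n k ≤ n^k / k!
    have hchoose : (n.choose k : ℝ) * (k.factorial : ℝ) ≤ (n : ℝ) ^ k := by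
      have h1 : k.factorial * n.choose k ≤ n ^ k := by
        rw [← Nat.descFactorial_eq_factorial_mul_choose]
        exact Nat.descFactorial_le_pow n k
      calc (n.choose k : ℝ) * (k.factorial : ℝ) = ((k.factorial * n.choose k : ℕ) : ℝ) := by
            push_cast; ring
        _ ≤ ((n ^ k : ℕ) : ℝ) := by exact_mod_cast h1
        _ = (n : ℝ) ^ k := by push_cast; ring
    have hfact0 : (0 : ℝ) < (k.factorial : ℝ) := by exact_mod_cast k.factorial_pos
    -- k! ≥ k^k / e^k
    have hfactlow : (k : ℝ) ^ k / (k.factorial : ℝ) ≤ Real.exp 1 ^ k := by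
      have := Real.pow_div_factorial_le_exp (x := (k : ℝ)) (by positivity) k
      calc (k : ℝ) ^ k / (k.factorial : ℝ) ≤ Real.exp k := this
        _ = Real.exp 1 ^ k := by rw [← Real.exp_nat_mul]; norm_num
    -- base bound
    have hbase : (n : ℝ) * ε * Real.exp 1 / k ≤ 1 / 2 := by
      have he3 : Real.exp 1 < 3 := by
        have := Real.exp_one_lt_d9
        linarith
      have h6 : 6 * (ε * (n : ℝ)) ≤ k := hknε
      have he0 : 0 < Real.exp 1 := Real.exp_pos 1
      rw [div_le_div_iff₀ hkR (by norm_num)]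
      nlinarith [mul_pos hε0 hn0]
    have hbase0 : 0 ≤ (n : ℝ) * ε * Real.exp 1 / k := by positivity
    -- main chain
    have hchain : (n.choose k : ℝ) * ε ^ k ≤ ((n : ℝ) * ε * Real.exp 1 / k) ^ k := by
      have e1 : (n.choose k : ℝ) ≤ (n : ℝ) ^ k / (k.factorial : ℝ) := by
        rw [le_div_iff₀ hfact0]; exact hchoose
      have e2 : (n.choose k : ℝ) * ε ^ k ≤ (n : ℝ) ^ k / (k.factorial : ℝ) * ε ^ k :=
        mul_le_mul_of_nonneg_right e1 (by positivity)
      refine e2.trans ?_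
      have e3 : ((n : ℝ) * ε * Real.exp 1 / k) ^ k
          = (n : ℝ) ^ k * ε ^ k * Real.exp 1 ^ k / (k : ℝ) ^ k := by
        rw [div_pow]; ring_nf
      rw [e3]
      have hkk : (k : ℝ) ^ k ≤ Real.exp 1 ^ k * (k.factorial : ℝ) :=
        (div_le_iff₀ hfact0).mp hfactlow
      rw [div_mul_eq_mul_div, div_le_div_iff₀ hfact0 (by positivity)]
      calc (n : ℝ) ^ k * ε ^ k * (k : ℝ) ^ k
          ≤ (n : ℝ) ^ k * ε ^ k * (Real.exp 1 ^ k * (k.factorial : ℝ)) :=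
            mul_le_mul_of_nonneg_left hkk (by positivity)
        _ = (n : ℝ) ^ k * ε ^ k * Real.exp 1 ^ k * (k.factorial : ℝ) := by ring
    have hhalf : ((n : ℝ) * ε * Real.exp 1 / k) ^ k ≤ (1 / 2 : ℝ) ^ k :=
      pow_le_pow_left₀ hbase0 hbase k
    have hfin : ((1 : ℝ) / 2) ^ k ≤ ((n : ℝ))⁻¹ := by
      have hlog2 : (0.6931471803 : ℝ) < Real.log 2 := Real.log_two_gt_d9
      have hlogn : 0 ≤ Real.log n := Real.log_nonneg (by linarith)
      have hklog2 : Real.log n ≤ (k : ℝ) * Real.log 2 := by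
        nlinarith
      have h2k : (n : ℝ) ≤ 2 ^ k := by
        calc (n : ℝ) = Real.exp (Real.log n) := (Real.exp_log hn0).symm
          _ ≤ Real.exp ((k : ℝ) * Real.log 2) := Real.exp_le_exp.mpr hklog2
          _ = Real.exp (Real.log 2) ^ k := by rw [← Real.exp_nat_mul]
          _ = 2 ^ k := by rw [Real.exp_log (by norm_num)]
      rw [div_pow, one_pow, inv_eq_one_div, div_le_div_iff₀ (by positivity) hn0]
      linarith
    calc (n.choose k : ℝ) * ε ^ k ≤ ((n : ℝ) * ε * Real.exp 1 / k) ^ k := hchain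
      _ ≤ (1 / 2 : ℝ) ^ k := hhalf
      _ ≤ ((n : ℝ))⁻¹ := hfin
  · push_neg at hkn
    rw [Nat.choose_eq_zero_of_lt hkn]
    simp only [Nat.cast_zero, zero_mul]
    positivity


open scoped Classical in
theorem stmt12 : ∃ C c : ℝ, 0 < C ∧ 0 < c ∧ ∃ N : ℕ, ∀ n : ℕ, N ≤ n →
    ∀ ε : ℝ, 0 < ε → ε < 1 → ∀ m : ℕ, (m : ℝ) = n / ε →
    ∀ (Ω : Type) (_ : MeasurableSpace Ω) (μ : Measure Ω), IsProbabilityMeasure μ →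
    ∀ f : Fin n → Ω → Fin m,
    iIndepFun f μ →
    (∀ (i : Fin n) (v : Fin m), μ {ω | f i ω = v} = (m : ENNReal)⁻¹) →
    ((∀ ω, ((Finset.univ.filter
          (fun i : Fin n => ∃ j, j ≠ i ∧ f j ω = f i ω)).card : ℝ)
        ≤ 2 * ∑ i : Fin n, (if ∃ j < i, f j ω = f i ω then (1 : ℝ) else 0)) ∧
      (∫ ω, (∑ i : Fin n, (if ∃ j < i, f j ω = f i ω then (1 : ℝ) else 0)) ∂μ)
        ≤ ε * n ∧
      μ {ω | C * (ε * n + Real.log n) ≤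
            ((Finset.univ.filter
              (fun i : Fin n => ∃ j, j ≠ i ∧ f j ω = f i ω)).card : ℝ)}
        ≤ ENNReal.ofReal ((n : ℝ) ^ (-c))) := by
  refine ⟨12, 1, by norm_num, by norm_num, 2, ?_⟩
  intro n hn ε hε0 hε1 m hm Ω mΩ μ hμ f hind hunif
  have hn2 : (2 : ℝ) ≤ (n : ℝ) := by exact_mod_cast hn
  have hn0 : (0 : ℝ) < n := by linarith
  have hm0R : (0 : ℝ) < m := by rw [hm]; positivity
  have hm0 : 0 < m := by exact_mod_cast hm0R
  have hεeq : ε = (n : ℝ) / m := by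
    rw [hm]
    field_simp
  have hsum : ∀ ω, (∑ i : Fin n, (if ∃ j < i, f j ω = f i ω then (1 : ℝ) else 0))
      = ((Finset.univ.filter (fun i : Fin n => ∃ j < i, f j ω = f i ω)).card : ℝ) := by
    intro ω; rw [Finset.sum_boole]
  have part1 : ∀ ω, ((Finset.univ.filter
      (fun i : Fin n => ∃ j, j ≠ i ∧ f j ω = f i ω)).card : ℝ)
      ≤ 2 * ∑ i : Fin n, (if ∃ j < i, f j ω = f i ω then (1 : ℝ) else 0) := by
    intro ω
    rw [hsum ω]
    exact_mod_cast aux_double (fun i => f i ω)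
  refine ⟨part1, ?_, ?_⟩
  · have h2 := aux_part2 (by omega) hm0 μ f hind hunif
    calc (∫ ω, (∑ i : Fin n, (if ∃ j < i, f j ω = f i ω then (1 : ℝ) else 0)) ∂μ)
        ≤ (n : ℝ) / m * n := h2
      _ = ε * n := by rw [hεeq]
  · set k := ⌈6 * (ε * n + Real.log n)⌉₊ with hkdef
    have hlogn : 0 ≤ Real.log n := Real.log_nonneg (by linarith)
    have hεn0 : 0 < ε * n := by positivity
    have hk1 : 1 ≤ k := by
      rw [hkdef]
      exact Nat.one_le_iff_ne_zero.mpr (by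
        intro h
        have := Nat.ceil_eq_zero.mp h
        nlinarith)
    have hkge : 6 * (ε * n + Real.log n) ≤ (k : ℝ) := Nat.le_ceil _
    have hknε : 6 * ((n : ℝ) / m * n) ≤ (k : ℝ) := by
      rw [← hεeq]; linarith
    have hklog : 6 * Real.log n ≤ (k : ℝ) := by linarith
    set p : (Fin n → Fin m) → Prop := fun g =>
      k ≤ (Finset.univ.filter (fun i : Fin n => ∃ j < i, g j = g i)).card with hp
    have hsub : {ω | 12 * (ε * n + Real.log n) ≤
        ((Finset.univ.filter
          (fun i : Fin n => ∃ j, j ≠ i ∧ f j ω = f i ω)).card : ℝ)}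
        ⊆ {ω | p (fun i => f i ω)} := by
      intro ω hω
      simp only [Set.mem_setOf_eq] at hω ⊢
      rw [hp]
      have hd := aux_double (fun i => f i ω)
      have hdR : ((Finset.univ.filter
          (fun i : Fin n => ∃ j, j ≠ i ∧ f j ω = f i ω)).card : ℝ)
          ≤ 2 * ((Finset.univ.filter
          (fun i : Fin n => ∃ j < i, f j ω = f i ω)).card : ℝ) := by
        exact_mod_cast hd
      have h6 : 6 * (ε * n + Real.log n) ≤ ((Finset.univ.filter
          (fun i : Fin n => ∃ j < i, f j ω = f i ω)).card : ℝ) := by linarith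
      exact Nat.ceil_le.mpr h6
    have hcount : (Finset.univ.filter p).card ≤ n.choose k * (n ^ k * m ^ (n - k)) := by
      have hsub2 : Finset.univ.filter p ⊆
          (Finset.powersetCard k (Finset.univ : Finset (Fin n))).biUnion
            (fun S => Finset.univ.filter
              (fun g : Fin n → Fin m => ∀ i ∈ S, ∃ j < i, g j = g i)) := by
        intro g hg
        rw [Finset.mem_filter, hp] at hg
        obtain ⟨S, hSsub, hScard⟩ := Finset.exists_subset_card_eq hg.2
        refine Finset.mem_biUnion.mpr ⟨S, ?_, ?_⟩
        · exact Finset.mem_powersetCard.mpr ⟨Finset.subset_univ S, hScard⟩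
        · rw [Finset.mem_filter]
          refine ⟨Finset.mem_univ _, fun i hiS => ?_⟩
          have := hSsub hiS
          rw [Finset.mem_filter] at this
          exact this.2
      calc (Finset.univ.filter p).card
          ≤ ((Finset.powersetCard k (Finset.univ : Finset (Fin n))).biUnion
            (fun S => Finset.univ.filter
              (fun g : Fin n → Fin m => ∀ i ∈ S, ∃ j < i, g j = g i))).card :=
            Finset.card_le_card hsub2
        _ ≤ ∑ S ∈ Finset.powersetCard k (Finset.univ : Finset (Fin n)),
            (Finset.univ.filter
              (fun g : Fin n → Fin m => ∀ i ∈ S, ∃ j < i, g j = g i)).card :=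
            Finset.card_biUnion_le
        _ ≤ ∑ _S ∈ Finset.powersetCard k (Finset.univ : Finset (Fin n)),
            n ^ k * m ^ (n - k) := by
            refine Finset.sum_le_sum (fun S hS => ?_)
            have hc : S.card = k := (Finset.mem_powersetCard.mp hS).2
            have := aux_countS (m := m) hm0 S
            rwa [hc] at this
        _ = (Finset.powersetCard k (Finset.univ : Finset (Fin n))).card
            * (n ^ k * m ^ (n - k)) := by
            rw [Finset.sum_const, smul_eq_mul]
        _ = n.choose k * (n ^ k * m ^ (n - k)) := by
            rw [Finset.card_powersetCard, Finset.card_univ, Fintype.card_fin]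
    have hmeas : μ {ω | p (fun i => f i ω)}
        ≤ ((Finset.univ.filter p).card : ENNReal) * (m : ENNReal)⁻¹ ^ n := by
      have h := aux_meas_le μ f hind hunif p
      have he : (@Finset.filter (Fin n → Fin m) p
            (fun a => Classical.propDecidable (p a)) Finset.univ)
          = Finset.univ.filter p := by
        apply Finset.filter_congr_decidable
      rwa [he] at h
    have hC : ((Finset.univ.filter p).card : ENNReal) * (m : ENNReal)⁻¹ ^ n
        ≤ ((n.choose k * (n ^ k * m ^ (n - k)) : ℕ) : ENNReal) * (m : ENNReal)⁻¹ ^ n := by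
      exact mul_le_mul_left (by exact_mod_cast Nat.cast_le.mpr hcount) _
    have hE : ((n.choose k * (n ^ k * m ^ (n - k)) : ℕ) : ENNReal) * (m : ENNReal)⁻¹ ^ n
        = ENNReal.ofReal (((n.choose k * (n ^ k * m ^ (n - k)) : ℕ) : ℝ)
            * ((m : ℝ)⁻¹) ^ n) := by
      rw [ENNReal.ofReal_mul (Nat.cast_nonneg _), ENNReal.ofReal_natCast,
        ENNReal.ofReal_pow (by positivity), ENNReal.ofReal_inv_of_pos hm0R,
        ENNReal.ofReal_natCast]
    have hreal : (((n.choose k * (n ^ k * m ^ (n - k)) : ℕ) : ℝ) * ((m : ℝ)⁻¹) ^ n)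
        ≤ (n : ℝ) ^ (-(1 : ℝ)) := by
      have := aux_real (n := n) (m := m) (k := k) hn hm0 hk1 hknε hklog
      calc (((n.choose k * (n ^ k * m ^ (n - k)) : ℕ) : ℝ) * ((m : ℝ)⁻¹) ^ n)
          = (n.choose k : ℝ) * ((n : ℝ) ^ k * (m : ℝ) ^ (n - k)) * ((m : ℝ)⁻¹) ^ n := by
            push_cast; ring
        _ ≤ (n : ℝ) ^ (-(1 : ℝ)) := this
    calc μ {ω | 12 * (ε * n + Real.log n) ≤
          ((Finset.univ.filter
            (fun i : Fin n => ∃ j, j ≠ i ∧ f j ω = f i ω)).card : ℝ)}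
        ≤ μ {ω | p (fun i => f i ω)} := measure_mono hsub
      _ ≤ ((Finset.univ.filter p).card : ENNReal) * (m : ENNReal)⁻¹ ^ n := hmeas
      _ ≤ ((n.choose k * (n ^ k * m ^ (n - k)) : ℕ) : ENNReal) * (m : ENNReal)⁻¹ ^ n := hC
      _ = ENNReal.ofReal (((n.choose k * (n ^ k * m ^ (n - k)) : ℕ) : ℝ)
            * ((m : ℝ)⁻¹) ^ n) := hE
      _ ≤ ENNReal.ofReal ((n : ℝ) ^ (-(1 : ℝ))) := ENNReal.ofReal_le_ofReal hreal
end

section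
/- Let q : ℕ → [n] → ℝ_{≥0} be defined from probe sequences by q(s, j) = n·Pr_{x∈U}[∃ i ≤ s, h'_i(x) = j], where h' is constructed so that a ball x can reach slot j within its first i probes only if s(x,j) ≤ i and q₀(s(x,j), j) ≤ i, with q₀(s,j) = n·Pr_{x∈U}[∃ i ≤ s, h_i(x) = j]. Then q(i, j) ≤ i² for all i ≥ 1 and j ∈ [n]. -/
open scoped Classical in
/-- `q(h, i, j) = n · Pr_{x ∈ U}[∃ r ≤ i, h_r(x) = j]` (probe indices start at 1). -/
noncomputable def qfun {U : Type*} [Fintype U] (n : ℕ) (h : U → ℕ → Option (Fin n))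
    (i : ℕ) (j : Fin n) : ℝ :=
  (n : ℝ) * ((Finset.univ.filter
      (fun x : U => ∃ r ∈ Finset.Icc 1 i, h x r = some j)).card : ℝ) /
    (Fintype.card U)

theorem stmt18 {U : Type*} [Fintype U] [Nonempty U] (n : ℕ) (hn : 1 ≤ n)
    (h h' : U → ℕ → Option (Fin n)) (s : U → Fin n → ℕ)
    (hfirst : ∀ (x : U) (j : Fin n), 1 ≤ s x j ∧ h x (s x j) = some j)
    (hconstruct : ∀ (x : U) (j : Fin n) (i : ℕ),
      (∃ r ∈ Finset.Icc 1 i, h' x r = some j) →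
        s x j ≤ i ∧ qfun n h (s x j) j ≤ (i : ℝ)) :
    ∀ i : ℕ, 1 ≤ i → ∀ j : Fin n, qfun n h' i j ≤ (i : ℝ) ^ 2 := by
  classical
  intro i hi j
  have hcU : (0 : ℝ) < (Fintype.card U : ℝ) := by
    exact_mod_cast Fintype.card_pos
  have hnpos : (0 : ℝ) < (n : ℝ) := by exact_mod_cast hn
  set T : Finset U := Finset.univ.filter
      (fun x : U => ∃ r ∈ Finset.Icc 1 i, h' x r = some j) with hT
  set A : ℕ → Finset U := fun k => Finset.univ.filter
      (fun x : U => s x j = k ∧ qfun n h k j ≤ (i : ℝ)) with hA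
  -- T is covered by the A k for k ∈ [1, i]
  have hsub : T ⊆ (Finset.Icc 1 i).biUnion A := by
    intro x hx
    simp only [hT, Finset.mem_filter] at hx
    obtain ⟨hc1, hc2⟩ := hconstruct x j i hx.2
    refine Finset.mem_biUnion.2 ⟨s x j, Finset.mem_Icc.2 ⟨(hfirst x j).1, hc1⟩, ?_⟩
    simp [hA]
    exact hc2
  -- each A k is small: n * |A k| ≤ i * |U|
  have hAk : ∀ k ∈ Finset.Icc 1 i, (n : ℝ) * ((A k).card : ℝ) ≤ (i : ℝ) * (Fintype.card U : ℝ) := by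
    intro k hk
    by_cases hq : qfun n h k j ≤ (i : ℝ)
    · set B : Finset U := Finset.univ.filter
        (fun x : U => ∃ r ∈ Finset.Icc 1 k, h x r = some j) with hB
      have hAB : A k ⊆ B := by
        intro x hx
        simp only [hA, Finset.mem_filter] at hx
        simp only [hB, Finset.mem_filter]
        refine ⟨Finset.mem_univ _, k, Finset.mem_Icc.2 ⟨?_, le_refl _⟩, ?_⟩
        · rw [← hx.2.1]; exact (hfirst x j).1
        · rw [← hx.2.1]; exact (hfirst x j).2
      have hqB : (n : ℝ) * (B.card : ℝ) / (Fintype.card U : ℝ) ≤ (i : ℝ) := by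
        have := hq
        unfold qfun at this
        rwa [Finset.filter_congr_decidable] at this
      have hBle : (n : ℝ) * (B.card : ℝ) ≤ (i : ℝ) * (Fintype.card U : ℝ) := by
        rw [div_le_iff₀ hcU] at hqB
        linarith
      have : ((A k).card : ℝ) ≤ (B.card : ℝ) := by
        exact_mod_cast Finset.card_le_card hAB
      nlinarith
    · have : A k = ∅ := by
        rw [hA]
        ext x
        simp [hq]
      simp [this]
      positivity
  -- combine
  have hTle : ((T.card : ℝ)) ≤ ∑ k ∈ Finset.Icc 1 i, ((A k).card : ℝ) := by
    have h1 : T.card ≤ ((Finset.Icc 1 i).biUnion A).card := Finset.card_le_card hsub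
    have h2 : ((Finset.Icc 1 i).biUnion A).card ≤ ∑ k ∈ Finset.Icc 1 i, (A k).card :=
      Finset.card_biUnion_le
    exact_mod_cast le_trans h1 h2
  have hkey : (n : ℝ) * (T.card : ℝ) ≤ (i : ℝ) ^ 2 * (Fintype.card U : ℝ) := by
    have hsum : (n : ℝ) * ∑ k ∈ Finset.Icc 1 i, ((A k).card : ℝ) ≤
        ∑ k ∈ Finset.Icc 1 i, (i : ℝ) * (Fintype.card U : ℝ) := by
      rw [Finset.mul_sum]
      exact Finset.sum_le_sum hAk
    have hcard : ((Finset.Icc 1 i).card : ℝ) = (i : ℝ) := by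
      rw [Nat.card_Icc]; simp
    rw [Finset.sum_const, nsmul_eq_mul, hcard] at hsum
    nlinarith
  unfold qfun
  rw [Finset.filter_congr_decidable]
  rw [div_le_iff₀ hcU]
  convert hkey using 4
  · rfl
  · rw [hT]
    congr!
end

section
/- Suppose balls are hashed independently and uniformly to n/s bins of capacity s = (log^{(i+1)} n)^6, and each ball y independently survives (i.e., has hash level s(y) ≥ i+1) with probability 1 − 1/(log^{(i+1)} n)². If at most n balls are present, then the probability that a fixed bin receives at least s surviving balls is at most exp(−Ω((log^{(i+1)} n)²)). -/
open MeasureTheory ProbabilityTheory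
open scoped ENNReal

set_option maxHeartbeats 1000000 in
open scoped Classical in
theorem stmt19 : ∃ c : ℝ, 0 < c ∧
    ∀ (n i N m L s : ℕ), L = iterLog (i + 1) n → 2 ≤ L → s = L ^ 6 →
      n = m * s → N ≤ n →
    ∀ (Ω : Type) (_ : MeasurableSpace Ω) (μ : Measure Ω), IsProbabilityMeasure μ →
    ∀ (H : Fin N → Ω → Fin m) (Z : Fin N → Ω → Bool),
      iIndepFun (fun y => fun ω => (H y ω, Z y ω)) μ →
      (∀ (y : Fin N) (b : Fin m),
        μ {ω | H y ω = b ∧ Z y ω = true} =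
          ENNReal.ofReal ((1 / (m : ℝ)) * (1 - 1 / (L : ℝ) ^ 2))) →
      ∀ b : Fin m,
        μ {ω | s ≤ (Finset.univ.filter
              (fun y : Fin N => H y ω = b ∧ Z y ω = true)).card}
          ≤ ENNReal.ofReal (Real.exp (-c * (L : ℝ) ^ 2)) := by
  refine ⟨1/4, by norm_num, ?_⟩
  intro n i N m L s hLdef hL2 hsdef hn hN Ω mΩ μ hμ H Z hind hprob b
  have hm : 0 < m := b.pos
  set Lr : ℝ := (L : ℝ) with hLrdef
  have hLr : (2:ℝ) ≤ Lr := by rw [hLrdef]; exact_mod_cast hL2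
  have hL0 : (0:ℝ) < Lr := by linarith
  have hLsq : (4:ℝ) ≤ Lr ^ 2 := by nlinarith
  set t : ℝ := 1 / Lr ^ 2 with htdef
  have ht0 : 0 < t := by positivity
  set lam : ℝ := Real.exp t - 1 with hlamdef
  have hlam0 : 0 ≤ lam := by
    have := Real.one_le_exp ht0.le
    rw [hlamdef]; linarith
  set p : ℝ := (1 / (m : ℝ)) * (1 - 1 / Lr ^ 2) with hpdef
  have hm0 : (0:ℝ) < m := by exact_mod_cast hm
  have hp0 : 0 ≤ p := by
    have h1 : 1 / Lr ^ 2 ≤ 1 := by rw [div_le_one (by positivity)]; nlinarith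
    have h2 : (0:ℝ) ≤ 1 / (m:ℝ) := by positivity
    exact mul_nonneg h2 (by linarith)
  set lam₀ : ℝ≥0∞ := ENNReal.ofReal lam with hlam₀
  set p₀ : ℝ≥0∞ := ENNReal.ofReal p with hp₀
  set A : Fin N → Set Ω := fun y => {ω | H y ω = b ∧ Z y ω = true} with hA
  have hAmeas : ∀ y : Fin N, MeasurableSet[MeasurableSpace.comap
      (fun ω => (H y ω, Z y ω)) inferInstance] (A y) := by
    intro y
    refine ⟨{(b, true)}, measurableSet_singleton _, ?_⟩
    ext ω; simp [hA, Prod.ext_iff]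
  have hmuA : ∀ y, μ (A y) = p₀ := fun y => hprob y b
  have hInter : ∀ S : Finset (Fin N), μ (⋂ y ∈ S, A y) = p₀ ^ S.card := by
    intro S
    rw [hind.meas_biInter (fun y _ => hAmeas y)]
    rw [Finset.prod_congr rfl (fun y _ => hmuA y), Finset.prod_const]
  choose T hTsub hTmeas hTmu using fun S : Finset (Fin N) =>
    exists_measurable_superset μ (⋂ y ∈ S, A y)
  set f : Ω → ℝ≥0∞ :=
    fun ω => ∑ S : Finset (Fin N), lam₀ ^ S.card * (T S).indicator 1 ω with hf
  have hfm : ∀ S : Finset (Fin N),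
      Measurable (fun ω => lam₀ ^ S.card * (T S).indicator (1 : Ω → ℝ≥0∞) ω) :=
    fun S => (measurable_one.indicator (hTmeas S)).const_mul _
  have hfmeas : Measurable f := by
    apply Finset.measurable_sum
    exact fun S _ => hfm S
  set ε : ℝ≥0∞ := (1 + lam₀) ^ s with hε
  have hsub : {ω | s ≤ (Finset.univ.filter
        (fun y : Fin N => H y ω = b ∧ Z y ω = true)).card} ⊆ {ω | ε ≤ f ω} := by
    intro ω hω
    simp only [Set.mem_setOf_eq] at hω ⊢
    have step1 : ∀ S : Finset (Fin N),
        (∏ y ∈ S, (lam₀ * (A y).indicator 1 ω)) ≤ lam₀ ^ S.card * (T S).indicator 1 ω := by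
      intro S
      by_cases hω' : ω ∈ ⋂ y ∈ S, A y
      · have h1 : ∀ y ∈ S, ω ∈ A y := by simpa using hω'
        have h2 : (T S).indicator (1 : Ω → ℝ≥0∞) ω = 1 :=
          Set.indicator_of_mem (hTsub S hω') 1
        rw [h2, mul_one,
          Finset.prod_congr rfl (fun y hy => by
            rw [Set.indicator_of_mem (h1 y hy), Pi.one_apply, mul_one]),
          Finset.prod_const]
      · obtain ⟨y, hyS, hyA⟩ : ∃ y ∈ S, ω ∉ A y := by simpa using hω'
        refine le_trans (le_of_eq ?_) (zero_le)
        apply Finset.prod_eq_zero hyS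
        rw [Set.indicator_of_notMem hyA, mul_zero]
    have hexp : (1 + lam₀) ^ (Finset.univ.filter
        (fun y : Fin N => H y ω = b ∧ Z y ω = true)).card
        = ∏ y : Fin N, (lam₀ * (A y).indicator 1 ω + 1) := by
      rw [Finset.card_filter, ← Finset.prod_pow_eq_pow_sum]
      refine Finset.prod_congr rfl (fun y _ => ?_)
      by_cases hy : ω ∈ A y
      · have hy' : H y ω = b ∧ Z y ω = true := hy
        rw [if_pos hy', pow_one, Set.indicator_of_mem hy, Pi.one_apply, mul_one,
          add_comm]
      · have hy' : ¬(H y ω = b ∧ Z y ω = true) := hy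
        rw [if_neg hy', pow_zero, Set.indicator_of_notMem hy, mul_zero, zero_add]
    calc ε ≤ (1 + lam₀) ^ (Finset.univ.filter
            (fun y : Fin N => H y ω = b ∧ Z y ω = true)).card := by
          exact pow_le_pow_right₀ le_self_add hω
      _ = ∏ y : Fin N, (lam₀ * (A y).indicator 1 ω + 1) := hexp
      _ = ∑ S : Finset (Fin N), (∏ y ∈ S, (lam₀ * (A y).indicator 1 ω)) *
            ∏ _y ∈ Sᶜ, (1:ℝ≥0∞) :=
          Fintype.prod_add _ _
      _ = ∑ S : Finset (Fin N), ∏ y ∈ S, (lam₀ * (A y).indicator 1 ω) := by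
          simp
      _ ≤ f ω := Finset.sum_le_sum (fun S _ => step1 S)
  have hε0 : ε ≠ 0 := by
    apply pow_ne_zero
    simp
  have hεtop : ε ≠ ⊤ := by
    apply ENNReal.pow_ne_top
    exact ENNReal.add_ne_top.mpr ⟨ENNReal.one_ne_top, ENNReal.ofReal_ne_top⟩
  have hlint : ∫⁻ ω, f ω ∂μ = (1 + lam₀ * p₀) ^ N := by
    rw [hf, lintegral_finset_sum _ (fun S _ => hfm S)]
    have hone : ∀ S : Finset (Fin N),
        ∫⁻ ω, lam₀ ^ S.card * (T S).indicator 1 ω ∂μ = (lam₀ * p₀) ^ S.card := by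
      intro S
      rw [lintegral_const_mul _ (measurable_one.indicator (hTmeas S)),
        lintegral_indicator_one (hTmeas S), hTmu S, hInter S, mul_pow]
    rw [Finset.sum_congr rfl (fun S _ => hone S)]
    calc ∑ S : Finset (Fin N), (lam₀ * p₀) ^ S.card
        = ∑ S : Finset (Fin N), (∏ _y ∈ S, (lam₀ * p₀)) * ∏ _y ∈ Sᶜ, (1:ℝ≥0∞) := by
          simp [Finset.prod_const]
      _ = ∏ _y : Fin N, (lam₀ * p₀ + 1) := (Fintype.prod_add _ _).symm
      _ = (1 + lam₀ * p₀) ^ N := by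
          rw [Finset.prod_const, Finset.card_univ, Fintype.card_fin, add_comm]
  have hmain : μ {ω | s ≤ (Finset.univ.filter
        (fun y : Fin N => H y ω = b ∧ Z y ω = true)).card}
      ≤ (1 + lam₀ * p₀) ^ N / ε := by
    calc μ _ ≤ μ {ω | ε ≤ f ω} := measure_mono hsub
      _ ≤ (∫⁻ ω, f ω ∂μ) / ε := meas_ge_le_lintegral_div hfmeas.aemeasurable hε0 hεtop
      _ = (1 + lam₀ * p₀) ^ N / ε := by rw [hlint]
  refine hmain.trans ?_
  have h1 : (1:ℝ≥0∞) + lam₀ * p₀ = ENNReal.ofReal (1 + lam * p) := by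
    rw [ENNReal.ofReal_add (by norm_num) (mul_nonneg hlam0 hp0),
      ENNReal.ofReal_mul hlam0, ENNReal.ofReal_one]
  have h2 : (1:ℝ≥0∞) + lam₀ = ENNReal.ofReal (Real.exp t) := by
    have : Real.exp t = 1 + lam := by rw [hlamdef]; ring
    rw [this, ENNReal.ofReal_add (by norm_num) hlam0, ENNReal.ofReal_one]
  rw [hε, h1, h2, ← ENNReal.ofReal_pow (by positivity), ← ENNReal.ofReal_pow (by positivity),
    ← ENNReal.ofReal_div_of_pos (by positivity)]
  apply ENNReal.ofReal_le_ofReal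
  -- the real inequality
  have hsL : (s : ℝ) = Lr ^ 6 := by rw [hsdef]; push_cast; rfl
  have hNr : (N : ℝ) ≤ (m : ℝ) * s := by
    have : (N:ℝ) ≤ (n:ℝ) := by exact_mod_cast hN
    rw [hn] at this; push_cast at this; linarith
  have ht1 : t ≤ 1/4 := by
    rw [htdef, div_le_div_iff₀ (by positivity) (by norm_num)]; linarith
  have hlam_le : lam ≤ t + (3/4) * t ^ 2 := by
    have hb := Real.exp_bound (x := t) (by rw [abs_of_nonneg ht0.le]; linarith)
      (n := 2) (by norm_num)
    have habs : |Real.exp t - (1 + t)| ≤ |t| ^ 2 * (3 / 4) := by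
      have h44 : (3:ℝ) / (2*2) = 3/4 := by norm_num
      simpa [Finset.sum_range_succ, Nat.factorial, h44] using hb
    rw [abs_of_nonneg ht0.le] at habs
    have := abs_le.mp habs
    nlinarith [this.2]
  have hpm : p * m = 1 - t := by rw [hpdef, htdef]; field_simp
  have key1 : (1 + lam * p) ^ N ≤ Real.exp (lam * p * N) := by
    calc (1 + lam * p) ^ N ≤ (Real.exp (lam * p)) ^ N := by
          apply pow_le_pow_left₀ (by positivity)
          linarith [Real.add_one_le_exp (lam * p)]
      _ = Real.exp (lam * p * N) := by rw [← Real.exp_nat_mul]; ring_nf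
  have key2 : Real.exp (lam * p * N) ≤ Real.exp (lam * p * (m * s)) := by
    apply Real.exp_le_exp.mpr
    have : 0 ≤ lam * p := mul_nonneg hlam0 hp0
    nlinarith
  have hden : (Real.exp t) ^ s = Real.exp (t * s) := by
    rw [← Real.exp_nat_mul]; ring_nf
  rw [hden, div_le_iff₀ (by positivity), ← Real.exp_add]
  refine le_trans (key1.trans key2) (Real.exp_le_exp.mpr ?_)
  have hexp2 : lam * p * (m * s) = lam * (p * m) * s := by ring
  rw [hexp2, hpm]
  have hs0 : (0:ℝ) ≤ s := Nat.cast_nonneg s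
  have hts : t ^ 2 * (s:ℝ) = Lr ^ 2 := by
    rw [hsL, htdef]; field_simp
  nlinarith [mul_le_mul_of_nonneg_right hlam_le hs0,
    mul_nonneg (mul_nonneg hlam0 ht0.le) hs0, sq_nonneg t,
    mul_nonneg (mul_nonneg (mul_nonneg ht0.le ht0.le) ht0.le) hs0]
end
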